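/- Let X_1, ..., X_n be a bounded martingale difference sequence with |X_k| \le a with respect to a filtration, and suppose the sum of conditional variances \Sigma_n^2 = \sum_{k=1}^n E[X_k^2 | H_{k-1}] is at most v, where v is a random variable taking values in [a_1 n, a_2 n] for constants 0 < a_1 < a_2. Then for any \beta > 1 and \delta in (0,1), with probability at least 1 - (1 + log_\beta(a_2/a_1)) \delta, the maximum over t \le n of Z_t = \sum_{k=1}^t X_k is less than (2/3) a ln(1/\delta) + sqrt(2 \beta v ln(1/\delta)). -/

import Mathlib

set_option linter.unusedSectionVars false
set_option maxHeartbeats 1000000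

open MeasureTheory Finset
open scoped ENNReal


lemma exp_le_quad_nonpos {x : ℝ} (hx : x ≤ 0) : Real.exp x ≤ 1 + x + x ^ 2 / 2 := by
  have h : AntitoneOn (fun x : ℝ => 1 + x + x ^ 2 / 2 - Real.exp x) (Set.Iic 0) := by
    apply antitoneOn_of_deriv_nonpos (convex_Iic 0)
    · fun_prop
    · fun_prop
    · intro y hy
      have hd : deriv (fun x : ℝ => 1 + x + x ^ 2 / 2 - Real.exp x) y = 1 + y - Real.exp y := by
        have h1 : HasDerivAt (fun x : ℝ => 1 + x + x ^ 2 / 2 - Real.exp x)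
            (0 + 1 + 2 * y ^ 1 / 2 - Real.exp y) y := by
          have := ((((hasDerivAt_const y (1:ℝ)).add (hasDerivAt_id y)).add
            (((hasDerivAt_pow 2 y)).div_const 2)).sub (Real.hasDerivAt_exp y))
          exact this
        rw [h1.deriv]; ring
      rw [hd]
      have := Real.add_one_le_exp y
      linarith
  have := h (Set.mem_Iic.2 hx) (Set.mem_Iic.2 le_rfl) hx
  simp only [Real.exp_zero] at this
  linarith

lemma fact_ge_two_mul_pow (n : ℕ) : (2 * 3 ^ n : ℝ) ≤ (n + 2).factorial := by
  induction n with
  | zero => norm_num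
  | succ k ih =>
    have h3 : ((k + 3).factorial : ℝ) = (k + 3) * (k + 2).factorial := by
      rw [show k + 3 = (k + 2) + 1 from rfl, Nat.factorial_succ]
      push_cast; ring
    have hf1 : (1:ℝ) ≤ (k + 2).factorial := by
      exact_mod_cast Nat.one_le_iff_ne_zero.2 (Nat.factorial_ne_zero _)
    calc (2 * 3 ^ (k+1) : ℝ) = 3 * (2 * 3 ^ k) := by ring
      _ ≤ 3 * (k + 2).factorial := by linarith
      _ ≤ (k + 3) * (k + 2).factorial := by nlinarith [Nat.cast_nonneg (α := ℝ) k]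
      _ = ((k + 1) + 2).factorial := by rw [show (k+1)+2 = k+3 from rfl, h3]

lemma exp_le_quad_nonneg {x u : ℝ} (hx : 0 ≤ x) (hxu : x ≤ u) (hu : u < 3) :
    Real.exp x ≤ 1 + x + x ^ 2 / 2 * (1 - u / 3)⁻¹ := by
  have hu0 : 0 ≤ u := le_trans hx hxu
  have hr0 : (0:ℝ) ≤ u / 3 := by linarith
  have hr1 : u / 3 < 1 := by linarith
  have hsum : Summable (fun n : ℕ => x ^ n / n.factorial) := Real.summable_pow_div_factorial x
  have hexp : Real.exp x = ∑' n : ℕ, x ^ n / n.factorial := by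
    rw [Real.exp_eq_exp_ℝ, NormedSpace.exp_eq_tsum_div]
  have hsplit : Real.exp x = 1 + x + ∑' n : ℕ, x ^ (n + 2) / (n + 2).factorial := by
    rw [hexp, ← Summable.sum_add_tsum_nat_add 2 hsum]
    norm_num [Finset.sum_range_succ]
  rw [hsplit]
  have hterm : ∀ n : ℕ, x ^ (n + 2) / (n + 2).factorial ≤ x ^ 2 / 2 * (u / 3) ^ n := by
    intro n
    have h1 : x ^ (n + 2) ≤ x ^ 2 * u ^ n := by
      rw [pow_add, mul_comm]
      gcongr
    have hf : (0:ℝ) < (n + 2).factorial := by positivity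
    rw [div_le_iff₀ hf]
    calc x ^ (n + 2) ≤ x ^ 2 * u ^ n := h1
      _ = (x ^ 2 / 2 * (u / 3) ^ n) * (2 * 3 ^ n) := by
          field_simp
          rw [mul_assoc, ← mul_pow, div_mul_cancel₀ u (by norm_num : (3:ℝ) ≠ 0)]
      _ ≤ (x ^ 2 / 2 * (u / 3) ^ n) * (n + 2).factorial := by
          have hn : (0:ℝ) ≤ x ^ 2 / 2 * (u / 3) ^ n := by positivity
          exact mul_le_mul_of_nonneg_left (fact_ge_two_mul_pow n) hn
  have hsum2 : Summable (fun n : ℕ => x ^ (n + 2) / (n + 2).factorial) :=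
    (summable_nat_add_iff 2).2 hsum
  have hsum3 : Summable (fun n : ℕ => x ^ 2 / 2 * (u / 3) ^ n) :=
    (summable_geometric_of_lt_one hr0 hr1).mul_left _
  have hle := Summable.tsum_le_tsum hterm hsum2 hsum3
  have hg : ∑' n : ℕ, x ^ 2 / 2 * (u / 3) ^ n = x ^ 2 / 2 * (1 - u / 3)⁻¹ := by
    rw [tsum_mul_left, tsum_geometric_of_lt_one hr0 hr1]
  rw [hg] at hle
  linarith

lemma exp_le_quad {x u : ℝ} (hxu : x ≤ u) (hu0 : 0 ≤ u) (hu : u < 3) :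
    Real.exp x ≤ 1 + x + x ^ 2 * (2 * (1 - u / 3))⁻¹ := by
  have hpos : (0:ℝ) < 1 - u / 3 := by linarith
  have key : x ^ 2 / 2 * (1 - u / 3)⁻¹ = x ^ 2 * (2 * (1 - u / 3))⁻¹ := by
    field_simp
  rcases le_or_gt x 0 with h | h
  · have h0 := exp_le_quad_nonpos h
    have h1 : (1:ℝ) ≤ (1 - u / 3)⁻¹ := by
      rw [le_inv_comm₀ one_pos hpos]; linarith
    have h2 : x ^ 2 / 2 ≤ x ^ 2 / 2 * (1 - u / 3)⁻¹ := by
      nlinarith [sq_nonneg x]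
    rw [← key]; linarith
  · have h0 := exp_le_quad_nonneg h.le hxu hu
    rw [← key]; linarith


lemma supermart_maximal {Ω : Type*} [m : MeasurableSpace Ω] {μ : Measure Ω}
    [IsProbabilityMeasure μ] {ℱ : Filtration ℕ m} {N : ℕ → Ω → ℝ}
    (hN : Supermartingale N ℱ μ) (hnonneg : ∀ t ω, 0 ≤ N t ω)
    {ε : ℝ} (hε : 0 < ε) (n : ℕ) :
    ENNReal.ofReal ε * μ {ω | ∃ t ≤ n, ε ≤ N t ω} ≤ ENNReal.ofReal (∫ ω, N 0 ω ∂μ) := by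
  set τ : Ω → ℕ∞ := fun ω => (hittingBtwn N (Set.Ici ε) 0 n ω : ℕ) with hτdef
  have hτ : IsStoppingTime ℱ τ := hittingBtwn_isStoppingTime hN.stronglyAdapted.adapted measurableSet_Ici
  have hτle : ∀ ω, τ ω ≤ n := fun ω => by
    show ((hittingBtwn N (Set.Ici ε) 0 n ω : ℕ) : ℕ∞) ≤ n
    exact_mod_cast hittingBtwn_le (u := N) (s := Set.Ici ε) (n := 0) ω
  set A : Set Ω := {ω | ∃ t ≤ n, ε ≤ N t ω} with hAdef
  have hAmeas : MeasurableSet A := by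
    have : A = ⋃ t ∈ Set.Iic n, {ω | ε ≤ N t ω} := by
      ext ω; simp [hAdef]
    rw [this]
    exact MeasurableSet.biUnion (Set.to_countable _) fun t _ =>
      measurableSet_le measurable_const ((hN.stronglyMeasurable t).measurable.le (ℱ.le t))
  have hint : Integrable (stoppedValue N τ) μ := by
    have h1 : Integrable (stoppedValue (-N) τ) μ :=
      hN.neg.integrable_stoppedValue hτ hτle
    have : stoppedValue (-N) τ = -(stoppedValue N τ) := rfl
    rw [this] at h1
    simpa using h1.neg
  have hA : ∀ ω ∈ A, ε ≤ stoppedValue N τ ω := by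
    intro ω hω
    obtain ⟨t, htn, hεt⟩ := hω
    refine stoppedValue_hittingBtwn_mem ?_
    exact ⟨t, Set.mem_Icc.2 ⟨Nat.zero_le _, htn⟩, hεt⟩
  have h1 : ε * (μ A).toReal ≤ ∫ ω in A, stoppedValue N τ ω ∂μ :=
    setIntegral_ge_of_const_le_real hAmeas (measure_ne_top μ A) hA hint.integrableOn
  have h2 : ∫ ω in A, stoppedValue N τ ω ∂μ ≤ ∫ ω, stoppedValue N τ ω ∂μ := by
    apply setIntegral_le_integral hint
    filter_upwards with ω
    exact hnonneg _ _
  have h3 : ∫ ω, stoppedValue N τ ω ∂μ ≤ ∫ ω, N 0 ω ∂μ := by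
    have := hN.neg.expected_stoppedValue_mono (isStoppingTime_const ℱ 0) hτ
      (fun ω => WithTop.coe_le_coe.2 (Nat.zero_le _)) hτle
    have he : stoppedValue (-N) (fun _ => ((0:ℕ) : WithTop ℕ)) = -(N 0) := rfl
    have he2 : stoppedValue (-N) τ = -(stoppedValue N τ) := rfl
    rw [stoppedValue_const, he2] at this
    simp only [Pi.neg_apply] at this
    rw [integral_neg, integral_neg] at this
    linarith
  calc ENNReal.ofReal ε * μ A = ENNReal.ofReal (ε * (μ A).toReal) := by
        rw [ENNReal.ofReal_mul hε.le, ENNReal.ofReal_toReal (measure_ne_top μ A)]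
    _ ≤ ENNReal.ofReal (∫ ω, N 0 ω ∂μ) := ENNReal.ofReal_le_ofReal (by linarith)

section
variable {Ω : Type*} [m : MeasurableSpace Ω]

/-- partial sums of the martingale differences -/
def Zproc (X : ℕ → Ω → ℝ) : ℕ → Ω → ℝ := fun t ω => ∑ k ∈ Finset.Icc 1 t, X k ω

/-- partial sums of conditional variances -/
noncomputable def Sproc (μ : Measure Ω) (ℱ : Filtration ℕ m) (X : ℕ → Ω → ℝ) : ℕ → Ω → ℝ :=
  fun t ω => ∑ k ∈ Finset.Icc 1 t, (μ[fun ω' => (X k ω') ^ 2|ℱ (k - 1)]) ω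

/-- the exponential process -/
noncomputable def Nproc (μ : Measure Ω) (ℱ : Filtration ℕ m) (X : ℕ → Ω → ℝ) (lam c : ℝ) : ℕ → Ω → ℝ :=
  fun t ω => Real.exp (lam * Zproc X t ω - c * lam ^ 2 * Sproc μ ℱ X t ω)

lemma Zproc_succ (X : ℕ → Ω → ℝ) (t : ℕ) (ω : Ω) :
    Zproc X (t + 1) ω = Zproc X t ω + X (t + 1) ω := by
  simp [Zproc, Finset.sum_Icc_succ_top (Nat.one_le_iff_ne_zero.2 (Nat.succ_ne_zero t))]

lemma Sproc_succ (μ : Measure Ω) (ℱ : Filtration ℕ m) (X : ℕ → Ω → ℝ) (t : ℕ) (ω : Ω) :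
    Sproc μ ℱ X (t + 1) ω = Sproc μ ℱ X t ω + (μ[fun ω' => (X (t + 1) ω') ^ 2|ℱ t]) ω := by
  simp [Sproc, Finset.sum_Icc_succ_top (Nat.one_le_iff_ne_zero.2 (Nat.succ_ne_zero t))]

variable {μ : Measure Ω} [IsProbabilityMeasure μ] {ℱ : Filtration ℕ m} {X : ℕ → Ω → ℝ} {a : ℝ}

lemma Zproc_meas (hadapted : ∀ k, StronglyMeasurable[ℱ k] (X k)) (t : ℕ) :
    StronglyMeasurable[ℱ t] (Zproc X t) := by
  apply Finset.stronglyMeasurable_fun_sum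
  intro k hk
  exact (hadapted k).mono (ℱ.mono (Finset.mem_Icc.1 hk).2)

lemma Sproc_meas (t : ℕ) : StronglyMeasurable[ℱ t] (Sproc μ ℱ X t) := by
  apply Finset.stronglyMeasurable_fun_sum
  intro k hk
  exact stronglyMeasurable_condExp.mono
    (ℱ.mono (le_trans (Nat.sub_le k 1) (Finset.mem_Icc.1 hk).2))

lemma Zproc_abs_le (hbdd : ∀ k ω, |X k ω| ≤ a) (t : ℕ) (ω : Ω) : |Zproc X t ω| ≤ t * a := by
  calc |Zproc X t ω| ≤ ∑ k ∈ Finset.Icc 1 t, |X k ω| := Finset.abs_sum_le_sum_abs _ _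
    _ ≤ ∑ k ∈ Finset.Icc 1 t, a := Finset.sum_le_sum fun k _ => hbdd k ω
    _ = t * a := by rw [Finset.sum_const, Nat.card_Icc]; simp [mul_comm]

lemma X_int (hadapted : ∀ k, StronglyMeasurable[ℱ k] (X k)) (hbdd : ∀ k ω, |X k ω| ≤ a)
    (k : ℕ) : Integrable (X k) μ := by
  refine ⟨((hadapted k).mono (ℱ.le k)).aestronglyMeasurable, ?_⟩
  exact HasFiniteIntegral.of_bounded (C := a) (ae_of_all _ fun ω => by
    simpa [Real.norm_eq_abs] using hbdd k ω)

lemma X_sq_int (hadapted : ∀ k, StronglyMeasurable[ℱ k] (X k)) (hbdd : ∀ k ω, |X k ω| ≤ a)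
    (k : ℕ) : Integrable (fun ω => (X k ω) ^ 2) μ := by
  refine ⟨(((hadapted k).mono (ℱ.le k)).pow 2).aestronglyMeasurable, ?_⟩
  refine HasFiniteIntegral.of_bounded (C := a ^ 2) (ae_of_all _ fun ω => ?_)
  simp only [Real.norm_eq_abs, abs_pow]
  nlinarith [abs_nonneg (X k ω), hbdd k ω]

lemma condvar_bdd (hadapted : ∀ k, StronglyMeasurable[ℱ k] (X k)) (hbdd : ∀ k ω, |X k ω| ≤ a)
    (k : ℕ) : ∀ᵐ ω ∂μ, 0 ≤ (μ[fun ω' => (X k ω') ^ 2|ℱ (k - 1)]) ω ∧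
      (μ[fun ω' => (X k ω') ^ 2|ℱ (k - 1)]) ω ≤ a ^ 2 := by
  have h0 : (0 : Ω → ℝ) ≤ᵐ[μ] μ[fun ω' => (X k ω') ^ 2|ℱ (k - 1)] :=
    condExp_nonneg (ae_of_all _ fun ω => sq_nonneg (X k ω))
  have h1 : μ[fun ω' => (X k ω') ^ 2|ℱ (k - 1)] ≤ᵐ[μ] μ[(fun _ => a ^ 2 : Ω → ℝ)|ℱ (k - 1)] := by
    refine condExp_mono (X_sq_int hadapted hbdd k) (integrable_const _) (ae_of_all _ fun ω => ?_)
    show X k ω ^ 2 ≤ a ^ 2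
    nlinarith [abs_nonneg (X k ω), sq_abs (X k ω), hbdd k ω]
  rw [condExp_const (ℱ.le (k - 1))] at h1
  filter_upwards [h0, h1] with ω ha0 ha1
  exact ⟨ha0, ha1⟩

lemma Sproc_bdd (hadapted : ∀ k, StronglyMeasurable[ℱ k] (X k)) (hbdd : ∀ k ω, |X k ω| ≤ a) :
    ∀ᵐ ω ∂μ, ∀ t t' : ℕ, t ≤ t' → 0 ≤ Sproc μ ℱ X t ω ∧ Sproc μ ℱ X t ω ≤ t * a ^ 2 ∧
      Sproc μ ℱ X t ω ≤ Sproc μ ℱ X t' ω := by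
  filter_upwards [ae_all_iff.2 (condvar_bdd (μ := μ) hadapted hbdd)] with ω hω t t' htt'
  refine ⟨Finset.sum_nonneg fun k _ => (hω k).1, ?_, ?_⟩
  · calc Sproc μ ℱ X t ω ≤ ∑ k ∈ Finset.Icc 1 t, a ^ 2 :=
        Finset.sum_le_sum fun k _ => (hω k).2
      _ = t * a ^ 2 := by rw [Finset.sum_const, Nat.card_Icc]; simp [mul_comm]
  · exact Finset.sum_le_sum_of_subset_of_nonneg
      (Finset.Icc_subset_Icc_right htt') (fun k _ _ => (hω k).1)

lemma Nproc_meas (hadapted : ∀ k, StronglyMeasurable[ℱ k] (X k)) (lam c : ℝ) (t : ℕ) :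
    StronglyMeasurable[ℱ t] (Nproc μ ℱ X lam c t) :=
  Real.continuous_exp.comp_stronglyMeasurable
    (((Zproc_meas hadapted t).const_mul lam).sub ((Sproc_meas t).const_mul (c * lam ^ 2)))

lemma Nproc_int (hadapted : ∀ k, StronglyMeasurable[ℱ k] (X k)) (hbdd : ∀ k ω, |X k ω| ≤ a)
    (ha : 0 < a) {lam c : ℝ} (hlam : 0 < lam) (hc : 0 < c) (t : ℕ) :
    Integrable (Nproc μ ℱ X lam c t) μ := by
  refine ⟨((Nproc_meas hadapted lam c t).mono (ℱ.le t)).aestronglyMeasurable, ?_⟩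
  refine HasFiniteIntegral.of_bounded
    (C := Real.exp (lam * (t * a) + c * lam ^ 2 * (t * a ^ 2))) ?_
  filter_upwards [Sproc_bdd hadapted hbdd] with ω hS
  rw [Real.norm_eq_abs, Nproc, abs_of_pos (Real.exp_pos _), Real.exp_le_exp]
  obtain ⟨hS0, hSle, -⟩ := hS t t le_rfl
  have h1 : lam * Zproc X t ω ≤ lam * (t * a) := by
    have := (abs_le.1 (Zproc_abs_le hbdd t ω)).2
    nlinarith
  have h2 : -(c * lam ^ 2 * Sproc μ ℱ X t ω) ≤ c * lam ^ 2 * (t * a ^ 2) := by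
    have hc2 : 0 ≤ c * lam ^ 2 := by positivity
    nlinarith
  linarith

lemma Sproc_meas_pred (t : ℕ) : StronglyMeasurable[ℱ t] (Sproc μ ℱ X (t + 1)) := by
  apply Finset.stronglyMeasurable_fun_sum
  intro k hk
  exact stronglyMeasurable_condExp.mono
    (ℱ.mono (Nat.sub_le_of_le_add (Finset.mem_Icc.1 hk).2))

lemma Nproc_supermartingale (hadapted : ∀ k, StronglyMeasurable[ℱ k] (X k))
    (hbdd : ∀ k ω, |X k ω| ≤ a)
    (hmd : ∀ k, 1 ≤ k → μ[X k|ℱ (k - 1)] =ᵐ[μ] 0)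
    (ha : 0 < a) {lam : ℝ} (hlam : 0 < lam) (hu3 : lam * a < 3) :
    Supermartingale (Nproc μ ℱ X lam ((2 * (1 - lam * a / 3))⁻¹)) ℱ μ := by
  set c : ℝ := (2 * (1 - lam * a / 3))⁻¹ with hc_def
  have hu0 : (0:ℝ) ≤ lam * a := by positivity
  have h13 : (0:ℝ) < 1 - lam * a / 3 := by linarith
  have hcpos : 0 < c := by rw [hc_def]; positivity
  refine supermartingale_nat (fun t => Nproc_meas hadapted lam c t)
    (fun t => Nproc_int hadapted hbdd ha hlam hcpos t) (fun t => ?_)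
  -- the one-step inequality
  set G : Ω → ℝ := fun ω => Real.exp (lam * Zproc X t ω - c * lam ^ 2 * Sproc μ ℱ X (t + 1) ω)
    with hG_def
  set E : Ω → ℝ := fun ω => Real.exp (lam * X (t + 1) ω) with hE_def
  have hGmeas : StronglyMeasurable[ℱ t] G :=
    Real.continuous_exp.comp_stronglyMeasurable
      (((Zproc_meas hadapted t).const_mul lam).sub ((Sproc_meas_pred t).const_mul (c * lam ^ 2)))
  have hGpos : ∀ ω, 0 < G ω := fun ω => Real.exp_pos _
  have hNG : Nproc μ ℱ X lam c (t + 1) = G * E := by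
    funext ω
    show Real.exp _ = G ω * E ω
    rw [hG_def, hE_def]
    simp only [Nproc, ← Real.exp_add]
    congr 1
    rw [Zproc_succ]
    ring
  have hEint : Integrable E μ := by
    refine ⟨(Real.continuous_exp.comp_stronglyMeasurable
      (((hadapted (t+1)).mono (ℱ.le (t+1))).const_mul lam)).aestronglyMeasurable, ?_⟩
    refine HasFiniteIntegral.of_bounded (C := Real.exp (lam * a)) (ae_of_all _ fun ω => ?_)
    rw [hE_def]
    simp only [Real.norm_eq_abs, abs_of_pos (Real.exp_pos _), Real.exp_le_exp]
    have := (abs_le.1 (hbdd (t+1) ω)).2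
    nlinarith
  have hGEint : Integrable (G * E) μ := hNG ▸ Nproc_int hadapted hbdd ha hlam hcpos (t + 1)
  have hpull : μ[Nproc μ ℱ X lam c (t + 1)|ℱ t] =ᵐ[μ] G * μ[E|ℱ t] := by
    rw [hNG]
    exact condExp_mul_of_stronglyMeasurable_left hGmeas hGEint hEint
  -- bound the conditional mgf
  set F : Ω → ℝ := fun ω => 1 + lam * X (t + 1) ω + c * lam ^ 2 * X (t + 1) ω ^ 2 with hF_def
  have hEF : ∀ ω, E ω ≤ F ω := by
    intro ω
    have hx : lam * X (t + 1) ω ≤ lam * a := by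
      have := (abs_le.1 (hbdd (t+1) ω)).2
      nlinarith
    have h := exp_le_quad hx hu0 hu3
    rw [hE_def, hF_def]
    calc Real.exp (lam * X (t+1) ω)
        ≤ 1 + lam * X (t+1) ω + (lam * X (t+1) ω) ^ 2 * (2 * (1 - lam * a / 3))⁻¹ := h
      _ = 1 + lam * X (t + 1) ω + c * lam ^ 2 * X (t + 1) ω ^ 2 := by rw [← hc_def]; ring
  have hFint : Integrable F μ := by
    have h1 : Integrable (fun ω => lam * X (t+1) ω) μ :=
      (X_int hadapted hbdd (t+1)).const_mul lam
    have h2 : Integrable (fun ω => c * lam ^ 2 * X (t+1) ω ^ 2) μ :=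
      (X_sq_int hadapted hbdd (t+1)).const_mul (c * lam ^ 2)
    exact ((integrable_const (1:ℝ)).add h1).add h2
  have hcond1 : μ[E|ℱ t] ≤ᵐ[μ] μ[F|ℱ t] := condExp_mono hEint hFint (ae_of_all _ hEF)
  have hmd' := hmd (t+1) (Nat.le_add_left 1 t)
  simp only [Nat.add_sub_cancel] at hmd'
  have hcondF : μ[F|ℱ t] =ᵐ[μ]
      fun ω => 1 + c * lam ^ 2 * (μ[fun ω' => X (t+1) ω' ^ 2|ℱ t]) ω := by
    have hsplit : F = (fun _ => (1:ℝ)) + ((lam • X (t+1)) +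
        ((c * lam ^ 2) • fun ω => X (t+1) ω ^ 2)) := by
      funext ω
      simp [hF_def, Pi.add_apply, Pi.smul_apply, smul_eq_mul]
      ring
    rw [hsplit]
    have h1 : Integrable (lam • X (t+1)) μ := (X_int hadapted hbdd (t+1)).smul lam
    have h2 : Integrable ((c * lam ^ 2) • fun ω => X (t+1) ω ^ 2) μ :=
      (X_sq_int hadapted hbdd (t+1)).smul (c * lam ^ 2)
    refine (condExp_add (integrable_const _) (h1.add h2) (ℱ t)).trans ?_
    have e0 : μ[(fun _ => (1:ℝ))|ℱ t] = fun _ => (1:ℝ) := condExp_const (ℱ.le t) _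
    have e12 := condExp_add h1 h2 (m := ℱ t)
    have e1 : μ[lam • X (t+1)|ℱ t] =ᵐ[μ] lam • μ[X (t+1)|ℱ t] := condExp_smul lam (X (t+1)) (ℱ t)
    have e2 : μ[(c * lam ^ 2) • fun ω => X (t+1) ω ^ 2|ℱ t] =ᵐ[μ]
        (c * lam ^ 2) • μ[fun ω => X (t+1) ω ^ 2|ℱ t] := condExp_smul (c * lam ^ 2) _ (ℱ t)
    rw [e0]
    filter_upwards [e12, e1, e2, hmd'] with ω h12 he1 he2 hmd0
    simp only [Pi.add_apply, Pi.smul_apply, smul_eq_mul] at *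
    rw [h12, he1, he2, hmd0]
    simp
  -- combine
  have hSsucc : ∀ ω, Sproc μ ℱ X (t + 1) ω = Sproc μ ℱ X t ω +
      (μ[fun ω' => X (t + 1) ω' ^ 2|ℱ t]) ω := fun ω => Sproc_succ μ ℱ X t ω
  filter_upwards [hpull, hcond1, hcondF] with ω h1 h2 h3
  rw [h1]
  have h4 : (μ[E|ℱ t]) ω ≤ 1 + c * lam ^ 2 * (μ[fun ω' => X (t+1) ω' ^ 2|ℱ t]) ω := by
    rw [← h3] at *; exact h2
  set V : ℝ := (μ[fun ω' => X (t+1) ω' ^ 2|ℱ t]) ω with hV_def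
  calc (G * μ[E|ℱ t]) ω = G ω * (μ[E|ℱ t]) ω := rfl
    _ ≤ G ω * (1 + c * lam ^ 2 * V) := mul_le_mul_of_nonneg_left h4 (hGpos ω).le
    _ ≤ G ω * Real.exp (c * lam ^ 2 * V) := by
        have := Real.add_one_le_exp (c * lam ^ 2 * V)
        have hG := (hGpos ω).le
        nlinarith
    _ = Nproc μ ℱ X lam c t ω := by
        rw [hG_def]
        show Real.exp _ * Real.exp _ = _
        rw [← Real.exp_add]
        simp only [Nproc]
        congr 1
        rw [hSsucc ω, ← hV_def]
        ring

lemma freedman_core (n : ℕ) (w l : ℝ) (ha : 0 < a) (hw : 0 < w) (hl : 0 < l)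
    (hadapted : ∀ k, StronglyMeasurable[ℱ k] (X k))
    (hbdd : ∀ k ω, |X k ω| ≤ a)
    (hmd : ∀ k, 1 ≤ k → μ[X k|ℱ (k - 1)] =ᵐ[μ] 0) :
    μ ({ω | Sproc μ ℱ X n ω ≤ w} ∩
       {ω | ∃ t ∈ Finset.Icc 1 n, (2/3)*a*l + Real.sqrt (2*w*l) ≤ Zproc X t ω})
    ≤ ENNReal.ofReal (Real.exp (-l)) := by
  classical
  have hs : 0 < Real.sqrt (2*l/w) := Real.sqrt_pos.2 (by positivity)
  set s : ℝ := Real.sqrt (2*l/w) with hs_def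
  have hq : 0 < a*s/3 := by positivity
  set q : ℝ := a*s/3 with hq_def
  have h1q : (0:ℝ) < 1 + q := by linarith
  set lam : ℝ := s/(1+q) with hlam_def
  have hlam : 0 < lam := by positivity
  have hu0 : 0 ≤ lam * a := by positivity
  have hua : lam * a = 3*q/(1+q) := by rw [hlam_def, hq_def]; field_simp
  have hu3 : lam * a < 3 := by
    rw [hua, div_lt_iff₀ h1q]; linarith
  set c : ℝ := (2 * (1 - lam * a / 3))⁻¹ with hc_def
  have hcq : c = (1+q)/2 := by
    have h13 : 1 - lam*a/3 = (1+q)⁻¹ := by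
      rw [hua]; field_simp; ring
    rw [hc_def, h13]; field_simp
  have hcpos : 0 < c := by rw [hcq]; positivity
  -- key arithmetic
  have hsR : s * Real.sqrt (2*w*l) = 2*l := by
    rw [hs_def, ← Real.sqrt_mul (by positivity)]
    rw [show (2*l/w)*(2*w*l) = (2*l)^2 by field_simp]
    exact Real.sqrt_sq (by positivity)
  have hws : w * s^2 = 2*l := by
    rw [hs_def, Real.sq_sqrt (by positivity)]
    field_simp
  have harith : l ≤ lam * ((2/3)*a*l + Real.sqrt (2*w*l)) - c * lam^2 * w := by
    have e1 : lam * Real.sqrt (2*w*l) = 2*l/(1+q) := by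
      rw [hlam_def, div_mul_eq_mul_div, hsR]
    have e2 : c * lam^2 * w = l/(1+q) := by
      rw [hcq, hlam_def, div_pow]
      field_simp
      nlinarith [hws]
    have e3 : lam * ((2/3)*a*l) = 2*q*l/(1+q) := by
      rw [hlam_def, hq_def]
      field_simp
    have heq : lam * ((2/3)*a*l + Real.sqrt (2*w*l)) - c * lam^2 * w
        = (2*q*l + 2*l - l)/(1+q) := by
      rw [mul_add, e1, e2, e3]
      field_simp
    rw [heq, le_div_iff₀ h1q]
    nlinarith
  -- supermartingale and maximal inequality
  have hsuper : Supermartingale (Nproc μ ℱ X lam c) ℱ μ :=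
    Nproc_supermartingale hadapted hbdd hmd ha hlam hu3
  have hnonneg : ∀ t ω, 0 ≤ Nproc μ ℱ X lam c t ω := fun t ω => (Real.exp_pos _).le
  have hmax := supermart_maximal hsuper hnonneg (Real.exp_pos l) n
  have hN0 : ∫ ω, Nproc μ ℱ X lam c 0 ω ∂μ = 1 := by
    have : Nproc μ ℱ X lam c 0 = fun _ => (1:ℝ) := by
      funext ω; simp [Nproc, Zproc, Sproc]
    rw [this]; simp
  rw [hN0, ENNReal.ofReal_one] at hmax
  -- event inclusion
  have hsub : μ ({ω | Sproc μ ℱ X n ω ≤ w} ∩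
      {ω | ∃ t ∈ Finset.Icc 1 n, (2/3)*a*l + Real.sqrt (2*w*l) ≤ Zproc X t ω})
      ≤ μ {ω | ∃ t ≤ n, Real.exp l ≤ Nproc μ ℱ X lam c t ω} := by
    apply measure_mono_ae
    filter_upwards [Sproc_bdd hadapted hbdd] with ω hS hω
    have hSn : Sproc μ ℱ X n ω ≤ w := hω.1
    obtain ⟨t, htmem, hZ⟩ := hω.2
    obtain ⟨ht1, htn⟩ := Finset.mem_Icc.1 htmem
    refine ⟨t, htn, ?_⟩
    rw [Nproc, Real.exp_le_exp]
    have hSt : Sproc μ ℱ X t ω ≤ w := le_trans (hS t n htn).2.2 hSn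
    have h1 : lam * ((2/3)*a*l + Real.sqrt (2*w*l)) ≤ lam * Zproc X t ω := by
      exact mul_le_mul_of_nonneg_left hZ hlam.le
    have h2 : c * lam^2 * Sproc μ ℱ X t ω ≤ c * lam^2 * w := by
      have : (0:ℝ) ≤ c * lam^2 := by positivity
      exact mul_le_mul_of_nonneg_left hSt this
    calc l ≤ lam * ((2/3)*a*l + Real.sqrt (2*w*l)) - c * lam^2 * w := harith
      _ ≤ lam * Zproc X t ω - c * lam ^ 2 * Sproc μ ℱ X t ω := by linarith
  refine le_trans hsub ?_
  -- conclude from the maximal inequality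
  have hd0 : ENNReal.ofReal (Real.exp l) ≠ 0 := by
    simp [ENNReal.ofReal_eq_zero, not_le, Real.exp_pos]
  have hdtop : ENNReal.ofReal (Real.exp l) ≠ ⊤ := ENNReal.ofReal_ne_top
  have : μ {ω | ∃ t ≤ n, Real.exp l ≤ Nproc μ ℱ X lam c t ω}
      ≤ 1 / ENNReal.ofReal (Real.exp l) := by
    rw [ENNReal.le_div_iff_mul_le (Or.inl hd0) (Or.inl hdtop), mul_comm]
    exact hmax
  refine le_trans this ?_
  rw [one_div, ← ENNReal.ofReal_inv_of_pos (Real.exp_pos l), ← Real.exp_neg]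

end

/-- Bernstein's inequality for martingales with a random bound `v` on the sum of
conditional variances: if `|X_k| ≤ a`, `E[X_k | ℱ_{k-1}] = 0`, and
`∑_{k=1}^n E[X_k² | ℱ_{k-1}] ≤ v` with `v ∈ [a₁ n, a₂ n]`, then for any `β > 1`,
with probability at least `1 - (1 + log_β (a₂/a₁)) δ`,
`max_{t ≤ n} Z_t < (2/3) a ln(1/δ) + sqrt(2 β v ln(1/δ))` where `Z_t = ∑_{k=1}^t X_k`. -/
theorem stmt_10 {Ω : Type*} [m : MeasurableSpace Ω] (μ : Measure Ω) [IsProbabilityMeasure μ]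
    (ℱ : Filtration ℕ m) (n : ℕ) (X : ℕ → Ω → ℝ) (v : Ω → ℝ)
    (a a1 a2 β δ : ℝ) (ha : 0 < a) (ha1 : 0 < a1) (ha12 : a1 < a2) (hβ : 1 < β)
    (hδ : δ ∈ Set.Ioo (0 : ℝ) 1)
    (hadapted : ∀ k, StronglyMeasurable[ℱ k] (X k))
    (hbdd : ∀ k ω, |X k ω| ≤ a)
    (hmd : ∀ k, 1 ≤ k → μ[X k|ℱ (k - 1)] =ᵐ[μ] 0)
    (hvar : ∀ᵐ ω ∂μ,
      ∑ k ∈ Finset.Icc 1 n, (μ[fun ω' => (X k ω') ^ 2|ℱ (k - 1)]) ω ≤ v ω)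
    (hv : ∀ ω, a1 * n ≤ v ω ∧ v ω ≤ a2 * n) :
    ENNReal.ofReal (1 - (1 + Real.logb β (a2 / a1)) * δ) ≤
      μ {ω | ∀ t ∈ Finset.Icc 1 n,
        ∑ k ∈ Finset.Icc 1 t, X k ω <
          (2 / 3) * a * Real.log (1 / δ) + Real.sqrt (2 * β * v ω * Real.log (1 / δ))} := by
  classical
  obtain ⟨hδ0, hδ1⟩ := hδ
  have hβ0 : (0:ℝ) < β := lt_trans one_pos hβ
  set L : ℝ := Real.logb β (a2 / a1) with hL_def
  have hA : (1:ℝ) < a2 / a1 := (one_lt_div ha1).2 ha12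
  have hL : 0 < L := Real.logb_pos hβ hA
  rcases Nat.eq_zero_or_pos n with hn | hn
  · subst hn
    have huniv : {ω : Ω | ∀ t ∈ Finset.Icc 1 0,
        ∑ k ∈ Finset.Icc 1 t, X k ω <
          (2 / 3) * a * Real.log (1 / δ) + Real.sqrt (2 * β * v ω * Real.log (1 / δ))}
        = Set.univ := by
      ext ω; simp
    rw [huniv, measure_univ]
    refine ENNReal.ofReal_le_one.2 ?_
    nlinarith
  have hn0 : (0:ℝ) < (n:ℝ) := by exact_mod_cast hn
  set l : ℝ := Real.log (1 / δ) with hl_def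
  have hl : 0 < l := Real.log_pos (by rw [lt_div_iff₀ hδ0]; linarith)
  have hexpl : Real.exp (-l) = δ := by
    rw [hl_def, one_div, Real.log_inv, neg_neg, Real.exp_log hδ0]
  set M : ℕ := ⌈L⌉₊ with hM_def
  have hM1 : 1 ≤ M := Nat.one_le_iff_ne_zero.2 (by
    simp only [hM_def, ne_eq, Nat.ceil_eq_zero, not_le]
    exact hL)
  have hML : (M:ℝ) ≤ 1 + L := by
    have := Nat.ceil_lt_add_one hL.le
    rw [hM_def]; linarith
  have hcover : a2 / a1 ≤ β ^ M := by
    have h1 : a2 / a1 = β ^ L := (Real.rpow_logb hβ0 (ne_of_gt hβ) (by positivity)).symm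
    have h2 : β ^ L ≤ β ^ (M:ℝ) :=
      Real.rpow_le_rpow_left_iff hβ |>.2 (Nat.le_ceil L)
    rw [h1, ← Real.rpow_natCast β M]
    exact h2
  -- bad events
  set w : ℕ → ℝ := fun j => β ^ (j+1) * (a1 * n) with hw_def
  have hwpos : ∀ j, 0 < w j := fun j => by rw [hw_def]; positivity
  set B : ℕ → Set Ω := fun j => {ω | Sproc μ ℱ X n ω ≤ w j} ∩
      {ω | ∃ t ∈ Finset.Icc 1 n, (2/3)*a*l + Real.sqrt (2*(w j)*l) ≤ Zproc X t ω} with hB_def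
  have hBj : ∀ j, μ (B j) ≤ ENNReal.ofReal δ := by
    intro j
    have := freedman_core n (w j) l ha (hwpos j) hl hadapted hbdd hmd
    rwa [hexpl] at this
  have hBmeas : ∀ j, MeasurableSet (B j) := by
    intro j
    refine MeasurableSet.inter ?_ ?_
    · exact measurableSet_le ((Sproc_meas n).mono (ℱ.le n)).measurable measurable_const
    · have : {ω | ∃ t ∈ Finset.Icc 1 n, (2/3)*a*l + Real.sqrt (2*(w j)*l) ≤ Zproc X t ω}
          = ⋃ t ∈ Finset.Icc 1 n, {ω | (2/3)*a*l + Real.sqrt (2*(w j)*l) ≤ Zproc X t ω} := by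
        ext ω; simp
      rw [this]
      exact MeasurableSet.biUnion (Finset.Icc 1 n).countable_toSet fun t _ =>
        measurableSet_le measurable_const ((Zproc_meas hadapted t).mono (ℱ.le t)).measurable
  -- exceptional null set
  set T : Set Ω := {ω | ¬ Sproc μ ℱ X n ω ≤ v ω} with hT_def
  have hT : μ T = 0 := by
    rw [hT_def]
    exact hvar
  set U : Set Ω := (⋃ j ∈ Finset.range M, B j) ∪ toMeasurable μ T with hU_def
  have hUmeas : MeasurableSet U := by
    refine MeasurableSet.union ?_ (measurableSet_toMeasurable μ T)
    exact MeasurableSet.biUnion (Finset.range M).countable_toSet fun j _ => hBmeas j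
  -- complement inclusion
  have hGc : {ω | ∀ t ∈ Finset.Icc 1 n,
        ∑ k ∈ Finset.Icc 1 t, X k ω <
          (2 / 3) * a * Real.log (1 / δ) + Real.sqrt (2 * β * v ω * Real.log (1 / δ))}ᶜ ⊆ U := by
    intro ω hω
    by_contra hU
    rw [hU_def] at hU
    simp only [Set.mem_union, not_or] at hU
    obtain ⟨hUB, hUT⟩ := hU
    have hBnot : ∀ j < M, ω ∉ B j := by
      intro j hj hmem
      exact hUB (Set.mem_biUnion (Finset.mem_range.2 hj) hmem)
    have hSv : Sproc μ ℱ X n ω ≤ v ω := by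
      by_contra hc
      exact hUT (subset_toMeasurable μ T hc)
    simp only [Set.mem_compl_iff, Set.mem_setOf_eq, not_forall] at hω
    obtain ⟨t, htmem, hZt⟩ := hω
    rw [not_lt] at hZt
    -- find the peeling level
    set r : ℝ := v ω / (a1 * n) with hr_def
    have hr1 : 1 ≤ r := (one_le_div (by positivity)).2 (hv ω).1
    have hrle : r ≤ a2 / a1 := by
      rw [hr_def, div_le_div_iff₀ (by positivity) ha1]
      calc v ω * a1 ≤ a2 * n * a1 := by nlinarith [(hv ω).2]
        _ = a2 * (a1 * n) := by ring
    have hlogb0 : 0 ≤ Real.logb β r := Real.logb_nonneg hβ hr1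
    set j : ℕ := min ⌊Real.logb β r⌋₊ (M - 1) with hj_def
    have hjM : j < M := lt_of_le_of_lt (min_le_right _ _) (by omega)
    have hlow : β ^ j ≤ r := by
      have h1 : (j:ℝ) ≤ Real.logb β r := by
        refine le_trans ?_ (Nat.floor_le hlogb0)
        exact_mod_cast min_le_left _ _
      calc β ^ j = β ^ (j:ℝ) := (Real.rpow_natCast β j).symm
        _ ≤ β ^ Real.logb β r := (Real.rpow_le_rpow_left_iff hβ).2 h1
        _ = r := Real.rpow_logb hβ0 (ne_of_gt hβ) (by positivity)
    have hhigh : r ≤ β ^ (j + 1) := by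
      rcases le_total (⌊Real.logb β r⌋₊) (M - 1) with hc | hc
      · have hje : j = ⌊Real.logb β r⌋₊ := by rw [hj_def]; omega
        have h1 : Real.logb β r < (j:ℝ) + 1 := by
          rw [hje]
          exact Nat.lt_floor_add_one _
        calc r = β ^ Real.logb β r := (Real.rpow_logb hβ0 (ne_of_gt hβ) (by positivity)).symm
          _ ≤ β ^ ((j:ℝ) + 1) := (Real.rpow_le_rpow_left_iff hβ).2 h1.le
          _ = β ^ (j + 1) := by
              rw [← Real.rpow_natCast β (j+1)]
              norm_num
      · have hje : j + 1 = M := by rw [hj_def]; omega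
        rw [hje]
        exact le_trans hrle hcover
    -- ω ∈ B j : contradiction
    refine hBnot j hjM ⟨?_, t, htmem, ?_⟩
    · show Sproc μ ℱ X n ω ≤ w j
      refine le_trans hSv ?_
      rw [hw_def]
      calc v ω = r * (a1 * n) := by rw [hr_def]; field_simp
        _ ≤ β ^ (j+1) * (a1 * n) := mul_le_mul_of_nonneg_right hhigh (by positivity)
    · show (2/3)*a*l + Real.sqrt (2*(w j)*l) ≤ Zproc X t ω
      refine le_trans ?_ hZt
      have hsq : 2*(w j)*l ≤ 2 * β * v ω * l := by
        have h2 : β ^ j * (a1 * (n:ℝ)) ≤ v ω := by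
          have h3 := mul_le_mul_of_nonneg_right hlow
            (le_of_lt (show (0:ℝ) < a1 * (n:ℝ) by positivity))
          rw [hr_def, div_mul_cancel₀] at h3
          · exact h3
          · positivity
        have hwv : w j ≤ β * v ω := by
          rw [hw_def]
          calc β ^ (j+1) * (a1 * (n:ℝ)) = β * (β ^ j * (a1 * (n:ℝ))) := by ring
            _ ≤ β * v ω := mul_le_mul_of_nonneg_left h2 hβ0.le
        calc 2*(w j)*l ≤ 2*(β*v ω)*l := by
              apply mul_le_mul_of_nonneg_right _ hl.le
              linarith
          _ = 2 * β * v ω * l := by ring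
      have := Real.sqrt_le_sqrt hsq
      linarith
  -- conclude
  have hμU : μ U ≤ ENNReal.ofReal ((1 + L) * δ) := by
    calc μ U ≤ μ (⋃ j ∈ Finset.range M, B j) + μ (toMeasurable μ T) := measure_union_le _ _
      _ ≤ (∑ j ∈ Finset.range M, μ (B j)) + 0 := by
          rw [measure_toMeasurable, hT]
          exact add_le_add_left (measure_biUnion_finset_le _ _) 0
      _ ≤ (∑ _j ∈ Finset.range M, ENNReal.ofReal δ) + 0 := by
          exact add_le_add_left (Finset.sum_le_sum fun j _ => hBj j) 0
      _ = (M : ℝ≥0∞) * ENNReal.ofReal δ := by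
          rw [add_zero, Finset.sum_const, Finset.card_range, nsmul_eq_mul]
      _ = ENNReal.ofReal ((M:ℝ) * δ) := by
          rw [ENNReal.ofReal_mul (by positivity), ENNReal.ofReal_natCast]
      _ ≤ ENNReal.ofReal ((1 + L) * δ) := by
          refine ENNReal.ofReal_le_ofReal ?_
          nlinarith
  calc ENNReal.ofReal (1 - (1 + L) * δ)
      = 1 - ENNReal.ofReal ((1 + L) * δ) := by
        rw [ENNReal.ofReal_sub _ (by positivity), ENNReal.ofReal_one]
    _ ≤ 1 - μ U := tsub_le_tsub_left hμU 1
    _ = μ Uᶜ := (prob_compl_eq_one_sub hUmeas).symm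
    _ ≤ _ := by
        refine measure_mono ?_
        rw [← Set.compl_subset_compl, compl_compl]
        exact hGc
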